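/- Let 2 ≤ k ≤ n and let B be an n×n complex Hermitian matrix with B ∈ Γ_I. Then 𝒫_k(B) equals the maximum, over all n×(k−1) complex matrices U satisfying UᴴU = I_{k−1} and such that UᴴBU is a diagonal matrix diag(λ'₁, …, λ'_{k−1}), of Σ_{i=1}^{k−1} arccot(λ'ᵢ). That is: every such U satisfies Σ_{i=1}^{k−1} arccot(λ'ᵢ) ≤ 𝒫_k(B), and there exists such a U achieving equality. -/

import Mathlib

open Real Matrix

/-- `arccot x = π/2 - arctan x`, a strictly decreasing bijection from `ℝ` onto `(0, π)`. -/
noncomputable def arccot (x : ℝ) : ℝ := π / 2 - Real.arctan x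

/-- `𝒫_{k,n}(λ)`: the maximum over subsets `I ⊆ {1,…,n}` with `|I| = k-1` of
`∑_{i ∈ I} arccot (λ i)`. -/
noncomputable def Pfun (n k : ℕ) (lam : Fin n → ℝ) : ℝ :=
  sSup {x : ℝ | ∃ s : Finset (Fin n), s.card = k - 1 ∧ x = ∑ i ∈ s, arccot (lam i)}

lemma arccot_le_arccot {x y : ℝ} (h : x ≤ y) : arccot y ≤ arccot x := by
  have := Real.arctan_strictMono.monotone h
  unfold arccot; linarith

lemma dot_self_eq {n : ℕ} (x : Fin n → ℂ) :
    star x ⬝ᵥ x = ((∑ i, Complex.normSq (x i) : ℝ) : ℂ) := by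
  rw [dotProduct]
  push_cast
  refine Finset.sum_congr rfl fun i _ => ?_
  rw [Complex.normSq_eq_conj_mul_self]
  rfl

lemma sum_normSq_pos {n : ℕ} {x : Fin n → ℂ} (hx : x ≠ 0) :
    0 < ∑ i, Complex.normSq (x i) := by
  obtain ⟨i, hi⟩ := Function.ne_iff.mp hx
  refine Finset.sum_pos' (fun j _ => Complex.normSq_nonneg _) ⟨i, Finset.mem_univ i, ?_⟩
  exact Complex.normSq_pos.mpr hi

/-- Column-space Rayleigh lemma: given `U` with orthonormal columns diagonalizing `B`
restricted to them, and a subset `T` of columns, there is a subspace of dimension `T.card`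
on which the Rayleigh quotient is a weighted average of `d j`, `j ∈ T`. -/
lemma col_space_exists {n m : ℕ} (B : Matrix (Fin n) (Fin n) ℂ)
    (U : Matrix (Fin n) (Fin m) ℂ) (d : Fin m → ℝ)
    (hU : Uᴴ * U = 1) (hD : Uᴴ * B * U = Matrix.diagonal (fun j => (d j : ℂ)))
    (T : Finset (Fin m)) :
    ∃ S : Submodule ℂ (Fin n → ℂ), Module.finrank ℂ S = T.card ∧
      ∀ x ∈ S, ∃ cr : Fin m → ℝ, (∀ j, 0 ≤ cr j) ∧ (∀ j ∉ T, cr j = 0) ∧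
        star x ⬝ᵥ B *ᵥ x = ((∑ j, d j * cr j : ℝ) : ℂ) ∧
        star x ⬝ᵥ x = ((∑ j, cr j : ℝ) : ℂ) := by
  have hinj : Function.Injective U.mulVecLin := by
    intro c c' h
    have h2 : Uᴴ *ᵥ (U *ᵥ c) = Uᴴ *ᵥ (U *ᵥ c') := by
      simpa [Matrix.mulVecLin_apply] using congrArg (Uᴴ.mulVec) h
    simpa [Matrix.mulVec_mulVec, hU] using h2
  set fam : Fin m → (Fin n → ℂ) := fun j => U *ᵥ Pi.single j 1 with hfam
  have hfam_eq : fam = U.mulVecLin ∘ (Pi.basisFun ℂ (Fin m)) := by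
    funext j
    simp [hfam, Matrix.mulVecLin_apply, Pi.basisFun_apply]
  have hli : LinearIndependent ℂ fam := by
    rw [hfam_eq]
    exact ((Pi.basisFun ℂ (Fin m)).linearIndependent).map' U.mulVecLin
      (LinearMap.ker_eq_bot.mpr hinj)
  refine ⟨Submodule.span ℂ (Set.range (fam ∘ (Subtype.val : T → Fin m))), ?_, ?_⟩
  · rw [finrank_span_eq_card (hli.comp (Subtype.val) Subtype.val_injective)]
    exact Fintype.card_coe T
  · intro x hx
    obtain ⟨c, hc⟩ := (Submodule.mem_span_range_iff_exists_fun ℂ).mp hx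
    set c' : Fin m → ℂ := ∑ j : T, c j • (Pi.single (j : Fin m) (1:ℂ) : Fin m → ℂ) with hc'
    have hsupp : ∀ j ∉ T, c' j = 0 := by
      intro j hj
      rw [hc', Finset.sum_apply]
      refine Finset.sum_eq_zero fun j' _ => ?_
      have hne : (j' : Fin m) ≠ j := fun h => hj (h ▸ j'.2)
      simp only [Pi.smul_apply, smul_eq_mul]
      rw [Pi.single_eq_of_ne (Ne.symm hne)]
      simp
    have hUc : U *ᵥ c' = x := by
      rw [← hc, hc', ← Matrix.mulVecLin_apply, map_sum]
      refine Finset.sum_congr rfl fun j _ => ?_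
      simp [hfam, Matrix.mulVecLin_apply]
    refine ⟨fun j => Complex.normSq (c' j), fun j => Complex.normSq_nonneg _,
      fun j hj => by show Complex.normSq (c' j) = 0; rw [hsupp j hj]; simp, ?_, ?_⟩
    · have key : star x ⬝ᵥ B *ᵥ x = star c' ⬝ᵥ (Matrix.diagonal (fun j => (d j : ℂ)) *ᵥ c') := by
        rw [← hUc, Matrix.star_mulVec, Matrix.mulVec_mulVec, ← Matrix.dotProduct_mulVec,
          Matrix.mulVec_mulVec, ← Matrix.mul_assoc, hD]
      rw [key, dotProduct]
      push_cast
      refine Finset.sum_congr rfl fun j _ => ?_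
      rw [Matrix.mulVec_diagonal, Complex.normSq_eq_conj_mul_self]
      simp only [Pi.star_apply, Complex.star_def]
      ring
    · have key : star x ⬝ᵥ x = star c' ⬝ᵥ c' := by
        rw [← hUc, Matrix.star_mulVec, ← Matrix.dotProduct_mulVec, Matrix.mulVec_mulVec, hU,
          Matrix.one_mulVec]
      rw [key, dotProduct]
      push_cast
      refine Finset.sum_congr rfl fun j _ => ?_
      rw [Complex.normSq_eq_conj_mul_self]
      rfl

/-- Poincaré interlacing: the `i`-th smallest diagonal value of a compression dominates the
`i`-th smallest eigenvalue. -/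
lemma interlace {n m : ℕ} (hmn : m ≤ n) (B : Matrix (Fin n) (Fin n) ℂ) (hB : B.IsHermitian)
    (U : Matrix (Fin n) (Fin m) ℂ) (d : Fin m → ℝ)
    (hU : Uᴴ * U = 1) (hD : Uᴴ * B * U = Matrix.diagonal (fun j => (d j : ℂ)))
    (i : Fin m) :
    hB.eigenvalues (Tuple.sort hB.eigenvalues (Fin.castLE hmn i)) ≤ d (Tuple.sort d i) := by
  set lam := hB.eigenvalues with hlam
  set σ := Tuple.sort lam with hσ
  set τ := Tuple.sort d with hτ
  set Q : Matrix (Fin n) (Fin n) ℂ := (hB.eigenvectorUnitary : Matrix (Fin n) (Fin n) ℂ) with hQ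
  have hQ1 : Qᴴ * Q = 1 := by
    rw [← Matrix.star_eq_conjTranspose]
    exact Unitary.coe_star_mul_self hB.eigenvectorUnitary
  have hQ2 : Qᴴ * B * Q = Matrix.diagonal (fun i => (lam i : ℂ)) := by
    rw [← Matrix.star_eq_conjTranspose]
    have := hB.conjStarAlgAut_star_eigenvectorUnitary
    simp only [Unitary.conjStarAlgAut_apply, star_star, Unitary.coe_star] at this
    exact this
  set T : Finset (Fin m) := Finset.image τ (Finset.Iic i) with hT
  set R : Finset (Fin n) := Finset.image σ (Finset.Ici (Fin.castLE hmn i)) with hR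
  have hTcard : T.card = (i : ℕ) + 1 := by
    rw [hT, Finset.card_image_of_injective _ τ.injective, Fin.card_Iic]
  have hRcard : R.card = n - (i : ℕ) := by
    rw [hR, Finset.card_image_of_injective _ σ.injective, Fin.card_Ici, Fin.coe_castLE]
  obtain ⟨S, hSrank, hSmem⟩ := col_space_exists B U d hU hD T
  obtain ⟨W, hWrank, hWmem⟩ := col_space_exists B Q lam hQ1 hQ2 R
  -- dimension counting
  have hdim : 0 < Module.finrank ℂ ↥(S ⊓ W) := by
    have hsum := Submodule.finrank_sup_add_finrank_inf_eq S W
    have h1 : Module.finrank ℂ ↥(S ⊔ W) ≤ n := by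
      have := Submodule.finrank_le (S ⊔ W)
      simpa [Module.finrank_pi] using this
    have hi : (i : ℕ) < n := lt_of_lt_of_le i.2 hmn
    omega
  have hbot : S ⊓ W ≠ ⊥ := by
    intro h
    rw [h, finrank_bot] at hdim
    exact lt_irrefl 0 hdim
  obtain ⟨a, ha0⟩ := Submodule.nonzero_mem_of_bot_lt (bot_lt_iff_ne_bot.mpr hbot)
  set x : Fin n → ℂ := (a : Fin n → ℂ) with hxdef
  have hxne : x ≠ 0 := fun h => ha0 (Subtype.ext h)
  obtain ⟨hxS, hxW⟩ := Submodule.mem_inf.mp a.2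
  obtain ⟨cr, hcr0, hcrT, hcrB, hcrN⟩ := hSmem x hxS
  obtain ⟨er, her0, herR, herB, herN⟩ := hWmem x hxW
  -- norms agree and are positive
  have hNval : (∑ j, cr j) = ∑ i, Complex.normSq (x i) :=
    Complex.ofReal_inj.mp (hcrN.symm.trans (dot_self_eq x))
  have hMval : (∑ j, er j) = ∑ i, Complex.normSq (x i) :=
    Complex.ofReal_inj.mp (herN.symm.trans (dot_self_eq x))
  have hNpos : 0 < ∑ j, cr j := hNval ▸ sum_normSq_pos hxne
  -- Rayleigh quotients agree
  have hE : (∑ j, d j * cr j) = ∑ j, lam j * er j :=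
    Complex.ofReal_inj.mp (hcrB.symm.trans herB)
  -- upper bound on S side
  have hub : (∑ j, d j * cr j) ≤ d (τ i) * ∑ j, cr j := by
    rw [Finset.mul_sum]
    refine Finset.sum_le_sum fun j _ => ?_
    by_cases hj : j ∈ T
    · obtain ⟨j', hj', rfl⟩ := Finset.mem_image.mp hj
      have : d (τ j') ≤ d (τ i) := Tuple.monotone_sort d (Finset.mem_Iic.mp hj')
      exact mul_le_mul_of_nonneg_right this (hcr0 _)
    · rw [hcrT j hj]; simp
  -- lower bound on W side
  have hlb : lam (σ (Fin.castLE hmn i)) * ∑ j, er j ≤ ∑ j, lam j * er j := by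
    rw [Finset.mul_sum]
    refine Finset.sum_le_sum fun j _ => ?_
    by_cases hj : j ∈ R
    · obtain ⟨j', hj', rfl⟩ := Finset.mem_image.mp hj
      have : lam (σ (Fin.castLE hmn i)) ≤ lam (σ j') :=
        Tuple.monotone_sort lam (Finset.mem_Ici.mp hj')
      exact mul_le_mul_of_nonneg_right this (her0 _)
    · rw [herR j hj]; simp
  have hNM : (∑ j, er j) = ∑ j, cr j := hMval.trans hNval.symm
  rw [hNM] at hlb
  have : lam (σ (Fin.castLE hmn i)) * ∑ j, cr j ≤ d (τ i) * ∑ j, cr j :=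
    le_trans (hlb.trans hE.symm.le) hub
  exact le_of_mul_le_mul_right (by linarith [this]) hNpos

theorem Pfun_variational (n k : ℕ) (hk : 2 ≤ k) (hkn : k ≤ n)
    (B : Matrix (Fin n) (Fin n) ℂ) (hB : B.IsHermitian)
    (hΓ : (∑ i, arccot (hB.eigenvalues i)) < π) :
    (∀ (U : Matrix (Fin n) (Fin (k - 1)) ℂ) (d : Fin (k - 1) → ℝ),
        Uᴴ * U = 1 → Uᴴ * B * U = Matrix.diagonal (fun i => (d i : ℂ)) →
        (∑ i, arccot (d i)) ≤ Pfun n k hB.eigenvalues) ∧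
    (∃ (U : Matrix (Fin n) (Fin (k - 1)) ℂ) (d : Fin (k - 1) → ℝ),
        Uᴴ * U = 1 ∧ Uᴴ * B * U = Matrix.diagonal (fun i => (d i : ℂ)) ∧
        (∑ i, arccot (d i)) = Pfun n k hB.eigenvalues) := by
  have hmn : k - 1 ≤ n := le_trans (Nat.sub_le k 1) hkn
  set lam := hB.eigenvalues with hlam
  set SetS := {x : ℝ | ∃ s : Finset (Fin n), s.card = k - 1 ∧ x = ∑ i ∈ s, arccot (lam i)}
    with hSetS
  have hPfun : Pfun n k lam = sSup SetS := rfl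
  have hfin : SetS.Finite := by
    apply Set.Finite.subset (Set.finite_range (fun s : Finset (Fin n) => ∑ i ∈ s, arccot (lam i)))
    rintro x ⟨s, _, rfl⟩
    exact ⟨s, rfl⟩
  constructor
  · intro U d hU hD
    set σ := Tuple.sort lam with hσ
    set τ := Tuple.sort d with hτ
    set s : Finset (Fin n) := Finset.image (fun j : Fin (k-1) => σ (Fin.castLE hmn j))
      Finset.univ with hs
    have hinj : Function.Injective (fun j : Fin (k-1) => σ (Fin.castLE hmn j)) :=
      fun a b h => Fin.castLE_injective hmn (σ.injective h)
    have hscard : s.card = k - 1 := by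
      rw [hs, Finset.card_image_of_injective _ hinj, Finset.card_univ, Fintype.card_fin]
    have hkey : (∑ i, arccot (d i)) ≤ ∑ i ∈ s, arccot (lam i) := by
      have h1 : (∑ i, arccot (d i)) = ∑ j, arccot (d (τ j)) :=
        (Equiv.sum_comp τ (fun i => arccot (d i))).symm
      have h2 : (∑ i ∈ s, arccot (lam i)) = ∑ j, arccot (lam (σ (Fin.castLE hmn j))) := by
        rw [hs, Finset.sum_image (fun a _ b _ h => hinj h)]
      rw [h1, h2]
      refine Finset.sum_le_sum fun j _ => ?_
      exact arccot_le_arccot (interlace hmn B hB U d hU hD j)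
    refine le_trans hkey (le_csSup hfin.bddAbove ⟨s, hscard, rfl⟩)
  · have hne : SetS.Nonempty := by
      obtain ⟨s, _, hscard⟩ := Finset.exists_subset_card_eq
        (show k - 1 ≤ (Finset.univ : Finset (Fin n)).card by simpa using hmn)
      exact ⟨∑ i ∈ s, arccot (lam i), s, hscard, rfl⟩
    obtain ⟨s, hscard, hssum⟩ := hne.csSup_mem hfin
    set Q : Matrix (Fin n) (Fin n) ℂ := (hB.eigenvectorUnitary : Matrix (Fin n) (Fin n) ℂ)
      with hQ
    have hQ1 : Qᴴ * Q = 1 := by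
      rw [← Matrix.star_eq_conjTranspose]
      exact Unitary.coe_star_mul_self hB.eigenvectorUnitary
    have hQ2 : Qᴴ * B * Q = Matrix.diagonal (fun i => (lam i : ℂ)) := by
      rw [← Matrix.star_eq_conjTranspose]
      have := hB.conjStarAlgAut_star_eigenvectorUnitary
      simp only [Unitary.conjStarAlgAut_apply, star_star, Unitary.coe_star] at this
      exact this
    set emb := s.orderEmbOfFin hscard with hemb
    refine ⟨Q.submatrix id (⇑emb), fun j => lam (emb j), ?_, ?_, ?_⟩
    · rw [Matrix.conjTranspose_submatrix,
        ← Matrix.submatrix_mul Qᴴ Q (⇑emb) id (⇑emb) Function.bijective_id, hQ1]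
      exact Matrix.submatrix_one _ emb.injective
    · rw [Matrix.conjTranspose_submatrix]
      have hB' : B = B.submatrix id id := rfl
      rw [Matrix.mul_assoc, hB']
      rw [← Matrix.submatrix_mul B Q id id (⇑emb) Function.bijective_id]
      rw [← Matrix.submatrix_mul Qᴴ (B * Q) (⇑emb) id (⇑emb) Function.bijective_id]
      rw [← Matrix.mul_assoc, hQ2]
      exact Matrix.submatrix_diagonal _ _ emb.injective
    · have himg : Finset.image (⇑emb) Finset.univ = s := by
        apply Finset.coe_injective
        rw [Finset.coe_image, Finset.coe_univ, Set.image_univ, Finset.range_orderEmbOfFin]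
      have : (∑ j, arccot (lam (emb j))) = ∑ i ∈ s, arccot (lam i) := by
        rw [← himg, Finset.sum_image (fun a _ b _ h => emb.injective h)]
      rw [this, hPfun, hssum]
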